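/- Assume ŷ*_int = c_P/(L(1−α)β̂_p) ∈ (0,1). Then there exists z_R ∈ (0,1) with β̂_p(z_R + α(1−z_R))(1−ŷ*_int) = γ if and only if αβ̂_p(1−ŷ*_int) < γ < β̂_p(1−ŷ*_int); in that case z_R is unique and equals (1/(1−α))·(γ/(β̂_p(1−ŷ*_int)) − α), and the point (s, y, r, z_S, z_I, z_R) = (0, ŷ*_int, 1−ŷ*_int, 0, 0, z_R) is an equilibrium of the coupled SIRI epidemic–replicator dynamics, i.e. all six right-hand sides vanish there. (This equilibrium corresponds to the sliding mode of the reduced hybrid SIRI dynamics at the endemic level ŷ*_int.) -/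

import Mathlib

/-- With ŷ*_int = c_P/(L(1−α)β̂_p) ∈ (0,1): there exists
z_R ∈ (0,1) with β̂_p(z_R + α(1−z_R))(1−ŷ*_int) = γ iff
αβ̂_p(1−ŷ*_int) < γ < β̂_p(1−ŷ*_int); in that case z_R is unique, equals
(1/(1−α))(γ/(β̂_p(1−ŷ*_int)) − α), and the point
(s, y, r, z_S, z_I, z_R) = (0, ŷ*_int, 1−ŷ*_int, 0, 0, z_R) annihilates all six
right-hand sides of the coupled SIRI epidemic–replicator dynamics. -/
theorem siri_sliding_mode_equilibrium
    (βu βp βhu βhp α γ cP L cIU cIP Yh : ℝ)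
    (hβ : βu > βp) (hβp : βp > 0) (hβh : βhu > βhp) (hβhp : βhp > 0)
    (hα : α ∈ Set.Ioo (0:ℝ) 1) (hγ : γ > 0)
    (hcP : cP > 0) (hL : L > 0) (hc : cIU > cIP) (hcIP : cIP ≥ 0)
    (hYh : Yh = cP / (L * (1 - α) * βhp)) (hYh01 : Yh ∈ Set.Ioo (0:ℝ) 1) :
    ((∃ zR ∈ Set.Ioo (0:ℝ) 1, βhp * (zR + α * (1 - zR)) * (1 - Yh) = γ) ↔
      (α * βhp * (1 - Yh) < γ ∧ γ < βhp * (1 - Yh))) ∧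
    (∀ zR ∈ Set.Ioo (0:ℝ) 1, βhp * (zR + α * (1 - zR)) * (1 - Yh) = γ →
      zR = (1 / (1 - α)) * (γ / (βhp * (1 - Yh)) - α) ∧
      -- the six right-hand sides of the coupled SIRI dynamics vanish at
      -- (s, y, r, z_S, z_I, z_R) = (0, Yh, 1 − Yh, 0, 0, zR):
      -((βu * 0 + βp * (1 - 0)) * (0 + α * (1 - 0)) * 0 * Yh) = 0 ∧
      (βu * 0 + βp * (1 - 0)) * (0 + α * (1 - 0)) * 0 * Yh +
        (βhu * 0 + βhp * (1 - 0)) * (zR + α * (1 - zR)) * (1 - Yh) * Yh -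
        γ * Yh = 0 ∧
      -((βhu * 0 + βhp * (1 - 0)) * (zR + α * (1 - zR)) * (1 - Yh) * Yh) +
        γ * Yh = 0 ∧
      (0:ℝ) * (1 - 0) * (cP - L * (1 - α) * (βu * 0 + βp * (1 - 0)) * Yh) = 0 ∧
      (0:ℝ) * (1 - 0) * (cIP - cIU) = 0 ∧
      zR * (1 - zR) * (cP - L * (1 - α) * (βhu * 0 + βhp * (1 - 0)) * Yh) = 0) := by
  obtain ⟨hα0, hα1⟩ := hα
  obtain ⟨hY0, hY1⟩ := hYh01
  have h1α : (0:ℝ) < 1 - α := by linarith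
  have h1Y : (0:ℝ) < 1 - Yh := by linarith
  have hB : (0:ℝ) < βhp * (1 - Yh) := by positivity
  have hcPeq : cP = L * (1 - α) * βhp * Yh := by
    have hd : L * (1 - α) * βhp ≠ 0 := by positivity
    rw [hYh]; field_simp
  constructor
  · constructor
    · rintro ⟨zR, ⟨hz0, hz1⟩, heq⟩
      have key : γ = βhp * (1 - Yh) * (α + (1 - α) * zR) := by rw [← heq]; ring
      constructor
      · nlinarith [mul_pos (mul_pos hB h1α) hz0]
      · nlinarith [mul_pos (mul_pos hB h1α) (by linarith : (0:ℝ) < 1 - zR)]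
    · rintro ⟨h1, h2⟩
      have hgt : α < γ / (βhp * (1 - Yh)) := by
        rw [lt_div_iff₀ hB]; nlinarith
      have hlt : γ / (βhp * (1 - Yh)) < 1 := by
        rw [div_lt_one hB]; linarith
      refine ⟨(1 / (1 - α)) * (γ / (βhp * (1 - Yh)) - α), ⟨?_, ?_⟩, ?_⟩
      · have h0 : 0 < 1 / (1 - α) := by positivity
        nlinarith
      · rw [one_div, inv_mul_eq_div, div_lt_one h1α]; linarith
      · field_simp
        ring
  · rintro zR ⟨hz0, hz1⟩ heq
    refine ⟨?_, by ring, by rw [← heq]; ring, by rw [← heq]; ring, by ring, by ring, ?_⟩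
    · have h : γ / (βhp * (1 - Yh)) = zR + α * (1 - zR) := by
        field_simp
        linarith [heq]
      rw [h]
      field_simp
      ring
    · rw [hcPeq]; ring_nf
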